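/- The polynomial q(z₁,z₂) = 4z₂ − z₁² is Γ-distinguished: its zero set Z(q) intersects 𝔾₂ (e.g. at (0,0)), and every point of Z(q) lying in the topological boundary of 𝔾₂ lies in the distinguished boundary bΓ = {(z₁+z₂, z₁z₂) : |z₁| = |z₂| = 1}. -/

import Mathlib

noncomputable section

def G2 : Set (ℂ × ℂ) :=
  {w | ∃ z₁ z₂ : ℂ, ‖z₁‖ < 1 ∧ ‖z₂‖ < 1 ∧ w = (z₁ + z₂, z₁ * z₂)}

def GammaSet : Set (ℂ × ℂ) :=
  {w | ∃ z₁ z₂ : ℂ, ‖z₁‖ ≤ 1 ∧ ‖z₂‖ ≤ 1 ∧ w = (z₁ + z₂, z₁ * z₂)}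

def bGamma : Set (ℂ × ℂ) :=
  {w | ∃ z₁ z₂ : ℂ, ‖z₁‖ = 1 ∧ ‖z₂‖ = 1 ∧ w = (z₁ + z₂, z₁ * z₂)}

/-- Zero set of a polynomial in two variables. -/
def Zset (p : MvPolynomial (Fin 2) ℂ) : Set (ℂ × ℂ) :=
  {w | MvPolynomial.eval ![w.1, w.2] p = 0}

/-- A polynomial is Γ-distinguished if its zero set meets 𝔾₂ and meets the
topological boundary of 𝔾₂ (= Γ \ 𝔾₂) only inside the distinguished boundary bΓ. -/
def GammaDistinguished (p : MvPolynomial (Fin 2) ℂ) : Prop :=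
  (Zset p ∩ G2).Nonempty ∧ Zset p ∩ (GammaSet \ G2) ⊆ bGamma

/-- q(z₁,z₂) = 4 z₂ − z₁² is Γ-distinguished, with (0,0) in its zero set inside 𝔾₂;
moreover if (α+β)² = 4αβ then α = β. -/
theorem stmt3 :
    ((0 : ℂ), (0 : ℂ)) ∈ Zset (4 * MvPolynomial.X 1 - MvPolynomial.X 0 ^ 2) ∩ G2 ∧
    GammaDistinguished (4 * MvPolynomial.X 1 - MvPolynomial.X 0 ^ 2) ∧
    (∀ α β : ℂ, (α + β) ^ 2 = 4 * (α * β) → α = β) := by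

  have key : ∀ α β : ℂ, (α + β) ^ 2 = 4 * (α * β) → α = β := by
    intro α β h
    have h2 : (α - β) ^ 2 = 0 := by linear_combination h
    exact sub_eq_zero.mp (pow_eq_zero_iff two_ne_zero |>.mp h2)
  have hz0 : ((0 : ℂ), (0 : ℂ)) ∈ Zset (4 * MvPolynomial.X 1 - MvPolynomial.X 0 ^ 2) := by
    simp [Zset]
  have hg0 : ((0 : ℂ), (0 : ℂ)) ∈ G2 := ⟨0, 0, by norm_num, by norm_num, by norm_num⟩
  refine ⟨⟨hz0, hg0⟩, ⟨⟨(0, 0), hz0, hg0⟩, ?_⟩, key⟩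
  rintro ⟨w1, w2⟩ ⟨hz, ⟨α, β, hα, hβ, hw⟩, hnot⟩
  have h1 : w1 = α + β := congrArg Prod.fst hw
  have h2 : w2 = α * β := congrArg Prod.snd hw
  simp only [Zset, Set.mem_setOf_eq, map_sub, map_mul, map_pow, map_ofNat,
    MvPolynomial.eval_X, Matrix.cons_val_zero, Matrix.cons_val_one, Matrix.head_cons] at hz
  have hab : α = β := key α β (by rw [← h1, ← h2]; linear_combination -hz)
  subst hab
  rcases lt_or_eq_of_le hα with hlt | heq
  · exact absurd ⟨α, α, hlt, hlt, hw⟩ hnot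
  · exact ⟨α, α, heq, heq, hw⟩
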